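/- arXiv:2310.18563 — 10 statements merged into one kernel-verified Lean document; each statement's English description precedes it below -/
import Mathlib

section
/- Suppose the estimated propensity scores p_i satisfy the IPT balancing condition for the treated group, N^{-1} ∑_{i=1}^N W_i X_i / p_i = X̄, where X̄ = N^{-1} ∑_{i=1}^N X_i. Then for every coefficient vector β₁ ∈ ℝ^K, the augmented inverse probability weighting estimate of μ₁ equals the inverse probability weighting estimate of μ₁: N^{-1} ∑_{i=1}^N W_i (Y_i − X_i β₁) / p_i + N^{-1} ∑_{i=1}^N X_i β₁ = N^{-1} ∑_{i=1}^N W_i Y_i / p_i. -/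
/-- Under IPT balancing for the treated group, the AIPW estimate of μ₁ equals
the IPW estimate of μ₁, for every coefficient vector β₁. -/
theorem aipw_eq_ipw_mu1_ipt
    (N K : ℕ) (hN : 0 < N) (hK : 0 < K)
    (W : Fin N → ℝ) (hW : ∀ i, W i = 0 ∨ W i = 1)
    (X : Fin N → Fin K → ℝ) (hX1 : ∀ i, X i ⟨0, hK⟩ = 1)
    (Y : Fin N → ℝ)
    (p : Fin N → ℝ) (hp : ∀ i, p i ∈ Set.Ioo (0 : ℝ) 1)
    (hbal : ∀ j, (N : ℝ)⁻¹ * ∑ i, W i * X i j / p i = (N : ℝ)⁻¹ * ∑ i, X i j)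
    (β₁ : Fin K → ℝ) :
    (N : ℝ)⁻¹ * ∑ i, W i * (Y i - ∑ j, X i j * β₁ j) / p i
      + (N : ℝ)⁻¹ * ∑ i, ∑ j, X i j * β₁ j
    = (N : ℝ)⁻¹ * ∑ i, W i * Y i / p i := by
  have hNne : ((N : ℝ))⁻¹ ≠ 0 := by positivity
  have hbal' : ∀ j, (∑ i, W i * X i j / p i) = ∑ i, X i j := fun j =>
    mul_left_cancel₀ hNne (hbal j)
  have key : (∑ i, W i * (∑ j, X i j * β₁ j) / p i)
      = ∑ i, ∑ j, X i j * β₁ j := by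
    have : ∀ i, W i * (∑ j, X i j * β₁ j) / p i
        = ∑ j, (W i * X i j / p i) * β₁ j := by
      intro i
      rw [Finset.mul_sum, Finset.sum_div]
      congr 1; ext j; ring
    simp_rw [this]
    rw [Finset.sum_comm]
    conv_rhs => rw [Finset.sum_comm]
    congr 1; ext j
    rw [← Finset.sum_mul, ← Finset.sum_mul, hbal' j]
  have expand : ∀ i, W i * (Y i - ∑ j, X i j * β₁ j) / p i
      = W i * Y i / p i - W i * (∑ j, X i j * β₁ j) / p i := by
    intro i; ring
  simp_rw [expand]
  rw [Finset.sum_sub_distrib, key]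
  ring
end

section
/- Suppose the estimated propensity scores p_i satisfy the IPT balancing condition for the treated group, N^{-1} ∑_{i=1}^N W_i X_i / p_i = X̄, where X̄ = N^{-1} ∑_{i=1}^N X_i, and let β̃₁ ∈ ℝ^K satisfy the weighted least squares first-order conditions on the treated units, ∑_{i=1}^N (W_i / p_i) X_iᵀ (Y_i − X_i β̃₁) = 0. Then the inverse probability weighted regression adjustment estimate of μ₁ equals the inverse probability weighting estimate of μ₁: X̄ β̃₁ = N^{-1} ∑_{i=1}^N W_i Y_i / p_i. -/
/-- Under IPT balancing for the treated group, the IPWRA estimate of μ₁ equals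
the IPW estimate of μ₁. -/
theorem ipwra_eq_ipw_mu1_ipt
    (N K : ℕ) (hN : 0 < N) (hK : 0 < K)
    (W : Fin N → ℝ) (hW : ∀ i, W i = 0 ∨ W i = 1)
    (X : Fin N → Fin K → ℝ) (hX1 : ∀ i, X i ⟨0, hK⟩ = 1)
    (Y : Fin N → ℝ)
    (p : Fin N → ℝ) (hp : ∀ i, p i ∈ Set.Ioo (0 : ℝ) 1)
    (hbal : ∀ j, (N : ℝ)⁻¹ * ∑ i, W i * X i j / p i = (N : ℝ)⁻¹ * ∑ i, X i j)
    (βt₁ : Fin K → ℝ)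
    (hfoc : ∀ j, ∑ i, (W i / p i) * X i j * (Y i - ∑ k, X i k * βt₁ k) = 0) :
    ∑ j, ((N : ℝ)⁻¹ * ∑ i, X i j) * βt₁ j
    = (N : ℝ)⁻¹ * ∑ i, W i * Y i / p i := by
  have key : ∑ i, (W i / p i) * (∑ k, X i k * βt₁ k) = ∑ i, (W i / p i) * Y i := by
    have h0 := hfoc ⟨0, hK⟩
    simp only [hX1, mul_one] at h0
    have := Finset.sum_sub_distrib (f := fun i => (W i / p i) * Y i)
      (g := fun i => (W i / p i) * (∑ k, X i k * βt₁ k)) (s := Finset.univ)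
    simp only [mul_sub] at h0
    rw [Finset.sum_sub_distrib, sub_eq_zero] at h0
    exact h0.symm
  calc ∑ j, ((N : ℝ)⁻¹ * ∑ i, X i j) * βt₁ j
      = ∑ j, ((N : ℝ)⁻¹ * ∑ i, W i * X i j / p i) * βt₁ j := by
        simp_rw [hbal]
    _ = (N : ℝ)⁻¹ * ∑ i, (W i / p i) * (∑ k, X i k * βt₁ k) := by
        simp_rw [mul_assoc, ← Finset.mul_sum, Finset.sum_mul, Finset.mul_sum]
        rw [Finset.sum_comm]
        exact Finset.sum_congr rfl fun i _ => Finset.sum_congr rfl fun k _ => by ring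
    _ = (N : ℝ)⁻¹ * ∑ i, W i * Y i / p i := by
        rw [key]; exact congrArg _ (Finset.sum_congr rfl fun i _ => by ring)
end

section
/- Suppose the estimated propensity scores p_i satisfy the IPT balancing condition for the untreated group, N^{-1} ∑_{i=1}^N (1−W_i) X_i / (1−p_i) = X̄, where X̄ = N^{-1} ∑_{i=1}^N X_i. Then for every coefficient vector β₀ ∈ ℝ^K, the augmented inverse probability weighting estimate of μ₀ equals the inverse probability weighting estimate of μ₀: N^{-1} ∑_{i=1}^N (1−W_i)(Y_i − X_i β₀) / (1−p_i) + N^{-1} ∑_{i=1}^N X_i β₀ = N^{-1} ∑_{i=1}^N (1−W_i) Y_i / (1−p_i). -/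
/-- Under IPT balancing for the untreated group, the AIPW estimate of μ₀ equals
the IPW estimate of μ₀, for every coefficient vector β₀. -/
theorem aipw_eq_ipw_mu0_ipt
    (N K : ℕ) (hN : 0 < N) (hK : 0 < K)
    (W : Fin N → ℝ) (hW : ∀ i, W i = 0 ∨ W i = 1)
    (X : Fin N → Fin K → ℝ) (hX1 : ∀ i, X i ⟨0, hK⟩ = 1)
    (Y : Fin N → ℝ)
    (p : Fin N → ℝ) (hp : ∀ i, p i ∈ Set.Ioo (0 : ℝ) 1)
    (hbal : ∀ j, (N : ℝ)⁻¹ * ∑ i, (1 - W i) * X i j / (1 - p i)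
      = (N : ℝ)⁻¹ * ∑ i, X i j)
    (β₀ : Fin K → ℝ) :
    (N : ℝ)⁻¹ * ∑ i, (1 - W i) * (Y i - ∑ j, X i j * β₀ j) / (1 - p i)
      + (N : ℝ)⁻¹ * ∑ i, ∑ j, X i j * β₀ j
    = (N : ℝ)⁻¹ * ∑ i, (1 - W i) * Y i / (1 - p i) := by
  have hNne : ((N : ℝ))⁻¹ ≠ 0 := by positivity
  have hbal' : ∀ j, ∑ i, (1 - W i) * X i j / (1 - p i) = ∑ i, X i j := fun j =>
    mul_left_cancel₀ hNne (hbal j)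
  have key : ∑ i, (1 - W i) * (∑ j, X i j * β₀ j) / (1 - p i)
      = ∑ i, ∑ j, X i j * β₀ j := by
    have : ∀ i, (1 - W i) * (∑ j, X i j * β₀ j) / (1 - p i)
        = ∑ j, ((1 - W i) * X i j / (1 - p i)) * β₀ j := by
      intro i
      rw [Finset.mul_sum, Finset.sum_div]
      congr 1; ext j; ring
    simp_rw [this]
    rw [Finset.sum_comm]
    have : ∀ j, ∑ i, ((1 - W i) * X i j / (1 - p i)) * β₀ j
        = ∑ i, X i j * β₀ j := by
      intro j
      rw [← Finset.sum_mul, hbal' j, Finset.sum_mul]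
    simp_rw [this]
    exact Finset.sum_comm
  have expand : ∑ i, (1 - W i) * (Y i - ∑ j, X i j * β₀ j) / (1 - p i)
      = ∑ i, (1 - W i) * Y i / (1 - p i)
        - ∑ i, (1 - W i) * (∑ j, X i j * β₀ j) / (1 - p i) := by
    rw [← Finset.sum_sub_distrib]
    congr 1; ext i; ring
  rw [expand, key]; ring
end

section
/- Suppose the estimated propensity scores p_i satisfy the IPT balancing condition for the untreated group, N^{-1} ∑_{i=1}^N (1−W_i) X_i / (1−p_i) = X̄, where X̄ = N^{-1} ∑_{i=1}^N X_i, and let β̃₀ ∈ ℝ^K satisfy the weighted least squares first-order conditions on the untreated units, ∑_{i=1}^N [(1−W_i) / (1−p_i)] X_iᵀ (Y_i − X_i β̃₀) = 0. Then the inverse probability weighted regression adjustment estimate of μ₀ equals the inverse probability weighting estimate of μ₀: X̄ β̃₀ = N^{-1} ∑_{i=1}^N (1−W_i) Y_i / (1−p_i). -/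
/-- Under IPT balancing for the untreated group, the IPWRA estimate of μ₀ equals
the IPW estimate of μ₀. -/
theorem ipwra_eq_ipw_mu0_ipt
    (N K : ℕ) (hN : 0 < N) (hK : 0 < K)
    (W : Fin N → ℝ) (hW : ∀ i, W i = 0 ∨ W i = 1)
    (X : Fin N → Fin K → ℝ) (hX1 : ∀ i, X i ⟨0, hK⟩ = 1)
    (Y : Fin N → ℝ)
    (p : Fin N → ℝ) (hp : ∀ i, p i ∈ Set.Ioo (0 : ℝ) 1)
    (hbal : ∀ j, (N : ℝ)⁻¹ * ∑ i, (1 - W i) * X i j / (1 - p i)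
      = (N : ℝ)⁻¹ * ∑ i, X i j)
    (βt₀ : Fin K → ℝ)
    (hfoc : ∀ j, ∑ i, ((1 - W i) / (1 - p i)) * X i j * (Y i - ∑ k, X i k * βt₀ k) = 0) :
    ∑ j, ((N : ℝ)⁻¹ * ∑ i, X i j) * βt₀ j
    = (N : ℝ)⁻¹ * ∑ i, (1 - W i) * Y i / (1 - p i) := by
  have hNinv : ((N : ℝ)⁻¹) ≠ 0 := by
    have : (N : ℝ) ≠ 0 := Nat.cast_ne_zero.mpr hN.ne'
    simpa using inv_ne_zero this
  have h1 : ∀ j, ∑ i, (1 - W i) * X i j / (1 - p i) = ∑ i, X i j := fun j =>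
    mul_left_cancel₀ hNinv (hbal j)
  have key := hfoc ⟨0, hK⟩
  simp only [hX1, mul_one] at key
  have key' : ∑ i, ((1 - W i) / (1 - p i)) * (∑ k, X i k * βt₀ k)
      = ∑ i, (1 - W i) * Y i / (1 - p i) := by
    have h2 : ∑ i, (((1 - W i) / (1 - p i)) * Y i
        - ((1 - W i) / (1 - p i)) * (∑ k, X i k * βt₀ k)) = 0 := by
      rw [← key]; congr 1; ext i; ring
    rw [Finset.sum_sub_distrib, sub_eq_zero] at h2
    rw [← h2]; congr 1; ext i; ring
  calc ∑ j, ((N : ℝ)⁻¹ * ∑ i, X i j) * βt₀ j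
      = (N : ℝ)⁻¹ * ∑ j, (∑ i, (1 - W i) * X i j / (1 - p i)) * βt₀ j := by
        rw [Finset.mul_sum]
        refine Finset.sum_congr rfl fun j _ => ?_
        rw [h1 j]; ring
    _ = (N : ℝ)⁻¹ * ∑ i, ((1 - W i) / (1 - p i)) * (∑ k, X i k * βt₀ k) := by
        congr 1
        simp_rw [Finset.sum_mul, Finset.mul_sum]
        rw [Finset.sum_comm]
        exact Finset.sum_congr rfl fun i _ => Finset.sum_congr rfl fun j _ => by ring
    _ = (N : ℝ)⁻¹ * ∑ i, (1 - W i) * Y i / (1 - p i) := by rw [key']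
end

section
/- (Proposition 1.) Suppose p¹_i ∈ (0,1) satisfy the IPT balancing condition for the treated group, N^{-1} ∑_{i=1}^N W_i X_i / p¹_i = X̄, and p⁰_i ∈ (0,1) satisfy the IPT balancing condition for the untreated group, N^{-1} ∑_{i=1}^N (1−W_i) X_i / (1−p⁰_i) = X̄, where X̄ = N^{-1} ∑_{i=1}^N X_i. Let β₁, β₀ ∈ ℝ^K be arbitrary coefficient vectors, and let β̃₁, β̃₀ ∈ ℝ^K satisfy the weighted least squares first-order conditions ∑_{i=1}^N (W_i / p¹_i) X_iᵀ (Y_i − X_i β̃₁) = 0 and ∑_{i=1}^N [(1−W_i)/(1−p⁰_i)] X_iᵀ (Y_i − X_i β̃₀) = 0. Then the IPW, AIPW, and IPWRA estimates of the ATE are numerically identical: N^{-1} ∑_{i=1}^N W_i Y_i / p¹_i − N^{-1} ∑_{i=1}^N (1−W_i) Y_i / (1−p⁰_i) = [N^{-1} ∑_{i=1}^N W_i (Y_i − X_i β₁)/p¹_i + N^{-1} ∑_{i=1}^N X_i β₁] − [N^{-1} ∑_{i=1}^N (1−W_i)(Y_i − X_i β₀)/(1−p⁰_i) + N^{-1}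 ∑_{i=1}^N X_i β₀] = X̄ β̃₁ − X̄ β̃₀. -/
/-- Proposition 1: with IPT weights, the IPW, AIPW (linear conditional means),
and IPWRA (linear conditional means) estimates of the ATE are numerically
identical. -/
theorem ipt_ipw_aipw_ipwra_ate_equivalence
    (N K : ℕ) (hN : 0 < N) (hK : 0 < K)
    (W : Fin N → ℝ) (hW : ∀ i, W i = 0 ∨ W i = 1)
    (X : Fin N → Fin K → ℝ) (hX1 : ∀ i, X i ⟨0, hK⟩ = 1)
    (Y : Fin N → ℝ)
    (p1 p0 : Fin N → ℝ)
    (hp1 : ∀ i, p1 i ∈ Set.Ioo (0 : ℝ) 1) (hp0 : ∀ i, p0 i ∈ Set.Ioo (0 : ℝ) 1)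
    (hbal1 : ∀ j, (N : ℝ)⁻¹ * ∑ i, W i * X i j / p1 i = (N : ℝ)⁻¹ * ∑ i, X i j)
    (hbal0 : ∀ j, (N : ℝ)⁻¹ * ∑ i, (1 - W i) * X i j / (1 - p0 i)
      = (N : ℝ)⁻¹ * ∑ i, X i j)
    (β₁ β₀ βt₁ βt₀ : Fin K → ℝ)
    (hfoc1 : ∀ j, ∑ i, (W i / p1 i) * X i j * (Y i - ∑ k, X i k * βt₁ k) = 0)
    (hfoc0 : ∀ j, ∑ i, ((1 - W i) / (1 - p0 i)) * X i j * (Y i - ∑ k, X i k * βt₀ k) = 0) :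
    ((N : ℝ)⁻¹ * ∑ i, W i * Y i / p1 i
        - (N : ℝ)⁻¹ * ∑ i, (1 - W i) * Y i / (1 - p0 i)
      = ((N : ℝ)⁻¹ * ∑ i, W i * (Y i - ∑ j, X i j * β₁ j) / p1 i
          + (N : ℝ)⁻¹ * ∑ i, ∑ j, X i j * β₁ j)
        - ((N : ℝ)⁻¹ * ∑ i, (1 - W i) * (Y i - ∑ j, X i j * β₀ j) / (1 - p0 i)
          + (N : ℝ)⁻¹ * ∑ i, ∑ j, X i j * β₀ j))
    ∧ ((N : ℝ)⁻¹ * ∑ i, W i * Y i / p1 i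
        - (N : ℝ)⁻¹ * ∑ i, (1 - W i) * Y i / (1 - p0 i)
      = ∑ j, ((N : ℝ)⁻¹ * ∑ i, X i j) * βt₁ j
        - ∑ j, ((N : ℝ)⁻¹ * ∑ i, X i j) * βt₀ j) := by
  have hN' : ((N : ℝ))⁻¹ ≠ 0 := by
    simpa using (Nat.cast_ne_zero (R := ℝ)).mpr hN.ne'
  have key1 : ∀ j, ∑ i, W i * X i j / p1 i = ∑ i, X i j :=
    fun j => mul_left_cancel₀ hN' (hbal1 j)
  have key0 : ∀ j, ∑ i, (1 - W i) * X i j / (1 - p0 i) = ∑ i, X i j :=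
    fun j => mul_left_cancel₀ hN' (hbal0 j)
  -- Balancing implies the weighted mean of Xβ equals the unweighted mean, treated group.
  have lem1 : ∀ β : Fin K → ℝ,
      ∑ i, W i * (∑ j, X i j * β j) / p1 i = ∑ i, ∑ j, X i j * β j := by
    intro β
    calc ∑ i, W i * (∑ j, X i j * β j) / p1 i
        = ∑ i, ∑ j, (W i * X i j / p1 i) * β j := by
          refine Finset.sum_congr rfl fun i _ => ?_
          rw [Finset.mul_sum, Finset.sum_div]
          exact Finset.sum_congr rfl fun j _ => by ring
      _ = ∑ j, (∑ i, W i * X i j / p1 i) * β j := by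
          rw [Finset.sum_comm]
          exact Finset.sum_congr rfl fun j _ => (Finset.sum_mul ..).symm
      _ = ∑ j, (∑ i, X i j) * β j := by
          exact Finset.sum_congr rfl fun j _ => by rw [key1]
      _ = ∑ i, ∑ j, X i j * β j := by
          rw [Finset.sum_comm]
          exact Finset.sum_congr rfl fun j _ => (Finset.sum_mul ..)
  have lem0 : ∀ β : Fin K → ℝ,
      ∑ i, (1 - W i) * (∑ j, X i j * β j) / (1 - p0 i) = ∑ i, ∑ j, X i j * β j := by
    intro β
    calc ∑ i, (1 - W i) * (∑ j, X i j * β j) / (1 - p0 i)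
        = ∑ i, ∑ j, ((1 - W i) * X i j / (1 - p0 i)) * β j := by
          refine Finset.sum_congr rfl fun i _ => ?_
          rw [Finset.mul_sum, Finset.sum_div]
          exact Finset.sum_congr rfl fun j _ => by ring
      _ = ∑ j, (∑ i, (1 - W i) * X i j / (1 - p0 i)) * β j := by
          rw [Finset.sum_comm]
          exact Finset.sum_congr rfl fun j _ => (Finset.sum_mul ..).symm
      _ = ∑ j, (∑ i, X i j) * β j := by
          exact Finset.sum_congr rfl fun j _ => by rw [key0]
      _ = ∑ i, ∑ j, X i j * β j := by
          rw [Finset.sum_comm]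
          exact Finset.sum_congr rfl fun j _ => (Finset.sum_mul ..)
  -- split the AIPW residual sums
  have split1 : ∀ β : Fin K → ℝ,
      ∑ i, W i * (Y i - ∑ j, X i j * β j) / p1 i
        = ∑ i, W i * Y i / p1 i - ∑ i, W i * (∑ j, X i j * β j) / p1 i := by
    intro β
    rw [← Finset.sum_sub_distrib]
    exact Finset.sum_congr rfl fun i _ => by ring
  have split0 : ∀ β : Fin K → ℝ,
      ∑ i, (1 - W i) * (Y i - ∑ j, X i j * β j) / (1 - p0 i)
        = ∑ i, (1 - W i) * Y i / (1 - p0 i)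
          - ∑ i, (1 - W i) * (∑ j, X i j * β j) / (1 - p0 i) := by
    intro β
    rw [← Finset.sum_sub_distrib]
    exact Finset.sum_congr rfl fun i _ => by ring
  -- FOC at the constant regressor
  have foc1' : ∑ i, W i * Y i / p1 i = ∑ i, W i * (∑ k, X i k * βt₁ k) / p1 i := by
    have h := hfoc1 ⟨0, hK⟩
    simp only [hX1, mul_one] at h
    have h2 : ∑ i, (W i * Y i / p1 i - W i * (∑ k, X i k * βt₁ k) / p1 i) = 0 := by
      rw [← h]
      exact Finset.sum_congr rfl fun i _ => by ring
    rw [Finset.sum_sub_distrib] at h2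
    linarith
  have foc0' : ∑ i, (1 - W i) * Y i / (1 - p0 i)
      = ∑ i, (1 - W i) * (∑ k, X i k * βt₀ k) / (1 - p0 i) := by
    have h := hfoc0 ⟨0, hK⟩
    simp only [hX1, mul_one] at h
    have h2 : ∑ i, ((1 - W i) * Y i / (1 - p0 i)
        - (1 - W i) * (∑ k, X i k * βt₀ k) / (1 - p0 i)) = 0 := by
      rw [← h]
      exact Finset.sum_congr rfl fun i _ => by ring
    rw [Finset.sum_sub_distrib] at h2
    linarith
  constructor
  · rw [split1 β₁, split0 β₀, lem1 β₁, lem0 β₀]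
    ring
  · have e1 : ∑ j, ((N : ℝ)⁻¹ * ∑ i, X i j) * βt₁ j
        = (N : ℝ)⁻¹ * ∑ i, W i * Y i / p1 i := by
      rw [foc1', lem1 βt₁, Finset.sum_comm, Finset.mul_sum]
      exact Finset.sum_congr rfl fun j _ => by rw [mul_assoc, Finset.sum_mul]
    have e0 : ∑ j, ((N : ℝ)⁻¹ * ∑ i, X i j) * βt₀ j
        = (N : ℝ)⁻¹ * ∑ i, (1 - W i) * Y i / (1 - p0 i) := by
      rw [foc0', lem0 βt₀, Finset.sum_comm, Finset.mul_sum]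
      exact Finset.sum_congr rfl fun j _ => by rw [mul_assoc, Finset.sum_mul]
    rw [e1, e0]
end

section
/- Suppose the estimated propensity scores p_i satisfy the CBPS sample moment conditions for the ATT, X̄₁ = N₁^{-1} ∑_{i=1}^N [p_i (1−W_i) / (1−p_i)] X_i, where N₁ = ∑_{i=1}^N W_i > 0 and X̄₁ = N₁^{-1} ∑_{i=1}^N W_i X_i. Then for every coefficient vector β₀ ∈ ℝ^K, the AIPW estimate of μ₀|₁ equals the IPW estimate of μ₀|₁: N₁^{-1} ∑_{i=1}^N [p_i (1−W_i)/(1−p_i)] (Y_i − X_i β₀) + X̄₁ β₀ = N₁^{-1} ∑_{i=1}^N p_i (1−W_i) Y_i / (1−p_i). -/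
/-- Under the CBPS moment conditions for the ATT, the AIPW estimate of μ₀|₁
equals the IPW estimate of μ₀|₁, for every coefficient vector β₀. -/
theorem aipw_eq_ipw_mu01_cbps
    (N K : ℕ) (hN : 0 < N) (hK : 0 < K)
    (W : Fin N → ℝ) (hW : ∀ i, W i = 0 ∨ W i = 1)
    (X : Fin N → Fin K → ℝ) (hX1 : ∀ i, X i ⟨0, hK⟩ = 1)
    (Y : Fin N → ℝ)
    (p : Fin N → ℝ) (hp : ∀ i, p i ∈ Set.Ioo (0 : ℝ) 1)
    (hN1 : 0 < ∑ i, W i)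
    (hbal : ∀ j, (∑ i, W i)⁻¹ * ∑ i, W i * X i j
      = (∑ i, W i)⁻¹ * ∑ i, p i * (1 - W i) / (1 - p i) * X i j)
    (β₀ : Fin K → ℝ) :
    (∑ i, W i)⁻¹ * ∑ i, p i * (1 - W i) / (1 - p i) * (Y i - ∑ j, X i j * β₀ j)
      + ∑ j, ((∑ i, W i)⁻¹ * ∑ i, W i * X i j) * β₀ j
    = (∑ i, W i)⁻¹ * ∑ i, p i * (1 - W i) * Y i / (1 - p i) := by
  have h1 : ∀ i, p i * (1 - W i) * Y i / (1 - p i)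
      = p i * (1 - W i) / (1 - p i) * Y i := by
    intro i; ring
  simp only [h1]
  have h2 : ∑ j, ((∑ i, W i)⁻¹ * ∑ i, W i * X i j) * β₀ j
      = (∑ i, W i)⁻¹ * ∑ i, p i * (1 - W i) / (1 - p i) * ∑ j, X i j * β₀ j := by
    calc ∑ j, ((∑ i, W i)⁻¹ * ∑ i, W i * X i j) * β₀ j
        = ∑ j, ((∑ i, W i)⁻¹ * ∑ i, p i * (1 - W i) / (1 - p i) * X i j) * β₀ j := by
          simp only [hbal]
      _ = (∑ i, W i)⁻¹ * ∑ i, p i * (1 - W i) / (1 - p i) * ∑ j, X i j * β₀ j := by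
          simp only [Finset.mul_sum, Finset.sum_mul]
          rw [Finset.sum_comm]
          exact Finset.sum_congr rfl fun i _ => Finset.sum_congr rfl fun j _ => by ring
  rw [h2, ← mul_add, ← Finset.sum_add_distrib]
  congr 1; congr 1; ext i; ring
end

section
/- Suppose the estimated propensity scores p_i satisfy the CBPS sample moment conditions for the ATT, X̄₁ = N₁^{-1} ∑_{i=1}^N [p_i (1−W_i) / (1−p_i)] X_i, where N₁ = ∑_{i=1}^N W_i > 0 and X̄₁ = N₁^{-1} ∑_{i=1}^N W_i X_i, and let β̃₀ ∈ ℝ^K satisfy the weighted least squares first-order conditions ∑_{i=1}^N [p_i (1−W_i)/(1−p_i)] X_iᵀ (Y_i − X_i β̃₀) = 0. Then the IPWRA estimate of μ₀|₁ equals the IPW estimate of μ₀|₁: X̄₁ β̃₀ = N₁^{-1} ∑_{i=1}^N p_i (1−W_i) Y_i / (1−p_i). -/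
/-- Under the CBPS moment conditions for the ATT, the IPWRA estimate of μ₀|₁
equals the IPW estimate of μ₀|₁. -/
theorem ipwra_eq_ipw_mu01_cbps
    (N K : ℕ) (hN : 0 < N) (hK : 0 < K)
    (W : Fin N → ℝ) (hW : ∀ i, W i = 0 ∨ W i = 1)
    (X : Fin N → Fin K → ℝ) (hX1 : ∀ i, X i ⟨0, hK⟩ = 1)
    (Y : Fin N → ℝ)
    (p : Fin N → ℝ) (hp : ∀ i, p i ∈ Set.Ioo (0 : ℝ) 1)
    (hN1 : 0 < ∑ i, W i)
    (hbal : ∀ j, (∑ i, W i)⁻¹ * ∑ i, W i * X i j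
      = (∑ i, W i)⁻¹ * ∑ i, p i * (1 - W i) / (1 - p i) * X i j)
    (βt₀ : Fin K → ℝ)
    (hfoc : ∀ j, ∑ i, (p i * (1 - W i) / (1 - p i)) * X i j
      * (Y i - ∑ k, X i k * βt₀ k) = 0) :
    ∑ j, ((∑ i, W i)⁻¹ * ∑ i, W i * X i j) * βt₀ j
    = (∑ i, W i)⁻¹ * ∑ i, p i * (1 - W i) * Y i / (1 - p i) := by
  set w : Fin N → ℝ := fun i => p i * (1 - W i) / (1 - p i) with hw
  -- FOC for the constant regressor
  have h0 := hfoc ⟨0, hK⟩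
  simp only [hX1, mul_one] at h0
  have hkey : ∑ i, w i * (∑ k, X i k * βt₀ k) = ∑ i, w i * Y i := by
    have := sub_eq_zero.mpr (rfl : (0:ℝ) = 0)
    have h' : ∑ i, (w i * Y i - w i * ∑ k, X i k * βt₀ k) = 0 := by
      simpa only [hw, mul_sub] using h0
    have h'' : ∑ i, w i * Y i - ∑ i, w i * ∑ k, X i k * βt₀ k = 0 := by
      simpa [Finset.sum_sub_distrib] using h'
    linarith
  calc ∑ j, ((∑ i, W i)⁻¹ * ∑ i, W i * X i j) * βt₀ j
      = ∑ j, ((∑ i, W i)⁻¹ * ∑ i, w i * X i j) * βt₀ j := by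
        refine Finset.sum_congr rfl fun j _ => ?_
        rw [hbal j]
    _ = (∑ i, W i)⁻¹ * ∑ i, w i * ∑ k, X i k * βt₀ k := by
        simp only [Finset.sum_mul, Finset.mul_sum]
        rw [Finset.sum_comm]
        exact Finset.sum_congr rfl fun i _ => Finset.sum_congr rfl fun j _ => by ring
    _ = (∑ i, W i)⁻¹ * ∑ i, w i * Y i := by rw [hkey]
    _ = (∑ i, W i)⁻¹ * ∑ i, p i * (1 - W i) * Y i / (1 - p i) := by
        congr 1
        refine Finset.sum_congr rfl fun i _ => ?_
        rw [hw]; ring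
end

section
/- (Proposition 2.) Suppose the estimated propensity scores p_i ∈ (0,1) satisfy the CBPS sample moment conditions for the ATT, X̄₁ = N₁^{-1} ∑_{i=1}^N [p_i (1−W_i) / (1−p_i)] X_i, where N₁ = ∑_{i=1}^N W_i > 0 and X̄₁ = N₁^{-1} ∑_{i=1}^N W_i X_i. Let β₀ ∈ ℝ^K be arbitrary and let β̃₀ ∈ ℝ^K satisfy the weighted least squares first-order conditions ∑_{i=1}^N [p_i (1−W_i)/(1−p_i)] X_iᵀ (Y_i − X_i β̃₀) = 0. Then the IPW, AIPW, and IPWRA estimates of the ATT are numerically identical: Ȳ₁ − N₁^{-1} ∑_{i=1}^N p_i (1−W_i) Y_i / (1−p_i) = Ȳ₁ − [N₁^{-1} ∑_{i=1}^N [p_i (1−W_i)/(1−p_i)](Y_i − X_i β₀) + X̄₁ β₀] = Ȳ₁ − X̄₁ β̃₀, where Ȳ₁ = N₁^{-1} ∑_{i=1}^N W_i Y_i. -/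
/-- Proposition 2: with CBPS weights for the ATT, the IPW, AIPW (linear
conditional mean), and IPWRA (linear conditional mean) estimates of the ATT
are numerically identical. -/
theorem cbps_ipw_aipw_ipwra_att_equivalence
    (N K : ℕ) (hN : 0 < N) (hK : 0 < K)
    (W : Fin N → ℝ) (hW : ∀ i, W i = 0 ∨ W i = 1)
    (X : Fin N → Fin K → ℝ) (hX1 : ∀ i, X i ⟨0, hK⟩ = 1)
    (Y : Fin N → ℝ)
    (p : Fin N → ℝ) (hp : ∀ i, p i ∈ Set.Ioo (0 : ℝ) 1)
    (hN1 : 0 < ∑ i, W i)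
    (hbal : ∀ j, (∑ i, W i)⁻¹ * ∑ i, W i * X i j
      = (∑ i, W i)⁻¹ * ∑ i, p i * (1 - W i) / (1 - p i) * X i j)
    (β₀ βt₀ : Fin K → ℝ)
    (hfoc : ∀ j, ∑ i, (p i * (1 - W i) / (1 - p i)) * X i j
      * (Y i - ∑ k, X i k * βt₀ k) = 0) :
    ((∑ i, W i)⁻¹ * ∑ i, W i * Y i
        - (∑ i, W i)⁻¹ * ∑ i, p i * (1 - W i) * Y i / (1 - p i)
      = (∑ i, W i)⁻¹ * ∑ i, W i * Y i
        - ((∑ i, W i)⁻¹ * ∑ i, p i * (1 - W i) / (1 - p i) * (Y i - ∑ j, X i j * β₀ j)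
          + ∑ j, ((∑ i, W i)⁻¹ * ∑ i, W i * X i j) * β₀ j))
    ∧ ((∑ i, W i)⁻¹ * ∑ i, W i * Y i
        - (∑ i, W i)⁻¹ * ∑ i, p i * (1 - W i) * Y i / (1 - p i)
      = (∑ i, W i)⁻¹ * ∑ i, W i * Y i
        - ∑ j, ((∑ i, W i)⁻¹ * ∑ i, W i * X i j) * βt₀ j) := by
  have key1 : ∑ i, p i * (1 - W i) * Y i / (1 - p i)
      = ∑ i, p i * (1 - W i) / (1 - p i) * Y i :=
    Finset.sum_congr rfl fun i _ => by ring
  -- generic rewriting of the X̄₁-term via balance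
  have keyX : ∀ β : Fin K → ℝ, ∑ j, ((∑ i, W i)⁻¹ * ∑ i, W i * X i j) * β j
      = (∑ i, W i)⁻¹ * ∑ i, p i * (1 - W i) / (1 - p i) * ∑ j, X i j * β j := by
    intro β
    calc ∑ j, ((∑ i, W i)⁻¹ * ∑ i, W i * X i j) * β j
        = ∑ j, ((∑ i, W i)⁻¹ * ∑ i, p i * (1 - W i) / (1 - p i) * X i j) * β j :=
          Finset.sum_congr rfl fun j _ => by rw [hbal j]
      _ = (∑ i, W i)⁻¹ * ∑ i, p i * (1 - W i) / (1 - p i) * ∑ j, X i j * β j := by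
          simp only [Finset.mul_sum, Finset.sum_mul]
          rw [Finset.sum_comm]
          exact Finset.sum_congr rfl fun i _ => Finset.sum_congr rfl fun j _ => by ring
  constructor
  · rw [key1, keyX β₀]
    congr 1
    rw [← mul_add, ← Finset.sum_add_distrib]
    exact congrArg _ (Finset.sum_congr rfl fun i _ => by ring)
  · rw [key1, keyX βt₀]
    congr 2
    have h0 := hfoc ⟨0, hK⟩
    simp only [hX1, mul_one] at h0
    have : ∑ i, p i * (1 - W i) / (1 - p i) * (Y i - ∑ k, X i k * βt₀ k) = 0 := h0
    have h2 : ∑ i, (p i * (1 - W i) / (1 - p i) * Y i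
        - p i * (1 - W i) / (1 - p i) * ∑ k, X i k * βt₀ k) = 0 := by
      rw [← this]; exact Finset.sum_congr rfl fun i _ => by ring
    rw [Finset.sum_sub_distrib] at h2
    linarith
end

section
/- Suppose the instrument propensity scores q¹_i ∈ (0,1) satisfy the IPT balancing condition for Z = 1, N^{-1} ∑_{i=1}^N Z_i X_i / q¹_i = X̄, and q⁰_i ∈ (0,1) satisfy the IPT balancing condition for Z = 0, N^{-1} ∑_{i=1}^N (1−Z_i) X_i / (1−q⁰_i) = X̄, where X̄ = N^{-1} ∑_{i=1}^N X_i. For each outcome V ∈ {Y, W}, let β_V,1, β_V,0 ∈ ℝ^K be arbitrary and let β̃_V,1, β̃_V,0 satisfy the WLS first-order conditions ∑_i (Z_i/q¹_i) X_iᵀ (V_i − X_i β̃_V,1) = 0 and ∑_i [(1−Z_i)/(1−q⁰_i)] X_iᵀ (V_i − X_i β̃_V,0) = 0. Denote by τ_V^{ipw}, τ_V^{aipw}, τ_V^{ipwra} the corresponding IPW, AIPW, and IPWRA ATE estimates for outcome V with treatment Z. If τ_W^{ipw} ≠ 0, then the three LATE estimates are numerically identical: τ_Y^{ipw}/τ_W^{ipw}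 = τ_Y^{aipw}/τ_W^{aipw} = τ_Y^{ipwra}/τ_W^{ipwra}. -/
/-- With IPT instrument-propensity-score weights, the IPW, AIPW (linear
conditional means), and IPWRA (linear conditional means) estimates of the LATE
are numerically identical. -/
theorem ipt_ipw_aipw_ipwra_late_equivalence
    (N K : ℕ) (hN : 0 < N) (hK : 0 < K)
    (W : Fin N → ℝ) (hW : ∀ i, W i = 0 ∨ W i = 1)
    (Z : Fin N → ℝ) (hZ : ∀ i, Z i = 0 ∨ Z i = 1)
    (X : Fin N → Fin K → ℝ) (hX1 : ∀ i, X i ⟨0, hK⟩ = 1)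
    (Y : Fin N → ℝ)
    (q1 q0 : Fin N → ℝ)
    (hq1 : ∀ i, q1 i ∈ Set.Ioo (0 : ℝ) 1) (hq0 : ∀ i, q0 i ∈ Set.Ioo (0 : ℝ) 1)
    (hbal1 : ∀ j, (N : ℝ)⁻¹ * ∑ i, Z i * X i j / q1 i = (N : ℝ)⁻¹ * ∑ i, X i j)
    (hbal0 : ∀ j, (N : ℝ)⁻¹ * ∑ i, (1 - Z i) * X i j / (1 - q0 i)
      = (N : ℝ)⁻¹ * ∑ i, X i j)
    (βY1 βY0 βW1 βW0 βtY1 βtY0 βtW1 βtW0 : Fin K → ℝ)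
    (hfocY1 : ∀ j, ∑ i, (Z i / q1 i) * X i j * (Y i - ∑ k, X i k * βtY1 k) = 0)
    (hfocY0 : ∀ j, ∑ i, ((1 - Z i) / (1 - q0 i)) * X i j * (Y i - ∑ k, X i k * βtY0 k) = 0)
    (hfocW1 : ∀ j, ∑ i, (Z i / q1 i) * X i j * (W i - ∑ k, X i k * βtW1 k) = 0)
    (hfocW0 : ∀ j, ∑ i, ((1 - Z i) / (1 - q0 i)) * X i j * (W i - ∑ k, X i k * βtW0 k) = 0)
    (τYipw τWipw τYaipw τWaipw τYipwra τWipwra : ℝ)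
    (hτYipw : τYipw = (N : ℝ)⁻¹ * ∑ i, Z i * Y i / q1 i
      - (N : ℝ)⁻¹ * ∑ i, (1 - Z i) * Y i / (1 - q0 i))
    (hτWipw : τWipw = (N : ℝ)⁻¹ * ∑ i, Z i * W i / q1 i
      - (N : ℝ)⁻¹ * ∑ i, (1 - Z i) * W i / (1 - q0 i))
    (hτYaipw : τYaipw = ((N : ℝ)⁻¹ * ∑ i, Z i * (Y i - ∑ j, X i j * βY1 j) / q1 i
        + (N : ℝ)⁻¹ * ∑ i, ∑ j, X i j * βY1 j)
      - ((N : ℝ)⁻¹ * ∑ i, (1 - Z i) * (Y i - ∑ j, X i j * βY0 j) / (1 - q0 i)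
        + (N : ℝ)⁻¹ * ∑ i, ∑ j, X i j * βY0 j))
    (hτWaipw : τWaipw = ((N : ℝ)⁻¹ * ∑ i, Z i * (W i - ∑ j, X i j * βW1 j) / q1 i
        + (N : ℝ)⁻¹ * ∑ i, ∑ j, X i j * βW1 j)
      - ((N : ℝ)⁻¹ * ∑ i, (1 - Z i) * (W i - ∑ j, X i j * βW0 j) / (1 - q0 i)
        + (N : ℝ)⁻¹ * ∑ i, ∑ j, X i j * βW0 j))
    (hτYipwra : τYipwra = ∑ j, ((N : ℝ)⁻¹ * ∑ i, X i j) * βtY1 j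
      - ∑ j, ((N : ℝ)⁻¹ * ∑ i, X i j) * βtY0 j)
    (hτWipwra : τWipwra = ∑ j, ((N : ℝ)⁻¹ * ∑ i, X i j) * βtW1 j
      - ∑ j, ((N : ℝ)⁻¹ * ∑ i, X i j) * βtW0 j)
    (hden : τWipw ≠ 0) :
    τYipw / τWipw = τYaipw / τWaipw ∧ τYipw / τWipw = τYipwra / τWipwra := by
  have hNne : (N : ℝ)⁻¹ ≠ 0 := inv_ne_zero (Nat.cast_ne_zero.mpr hN.ne')
  have hb1 : ∀ j, ∑ i, Z i * X i j / q1 i = ∑ i, X i j :=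
    fun j => mul_left_cancel₀ hNne (hbal1 j)
  have hb0 : ∀ j, ∑ i, (1 - Z i) * X i j / (1 - q0 i) = ∑ i, X i j :=
    fun j => mul_left_cancel₀ hNne (hbal0 j)
  have hA1 : ∀ β : Fin K → ℝ,
      ∑ i, Z i * (∑ j, X i j * β j) / q1 i = ∑ i, ∑ j, X i j * β j := by
    intro β
    calc ∑ i, Z i * (∑ j, X i j * β j) / q1 i
        = ∑ i, ∑ j, (Z i * X i j / q1 i) * β j := by
          refine Finset.sum_congr rfl fun i _ => ?_
          rw [Finset.mul_sum, Finset.sum_div]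
          exact Finset.sum_congr rfl fun j _ => by ring
      _ = ∑ j, ∑ i, (Z i * X i j / q1 i) * β j := Finset.sum_comm
      _ = ∑ j, (∑ i, Z i * X i j / q1 i) * β j := by
          simp [Finset.sum_mul]
      _ = ∑ j, (∑ i, X i j) * β j := by simp only [hb1]
      _ = ∑ j, ∑ i, X i j * β j := by simp [Finset.sum_mul]
      _ = ∑ i, ∑ j, X i j * β j := Finset.sum_comm
  have hA0 : ∀ β : Fin K → ℝ,
      ∑ i, (1 - Z i) * (∑ j, X i j * β j) / (1 - q0 i) = ∑ i, ∑ j, X i j * β j := by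
    intro β
    calc ∑ i, (1 - Z i) * (∑ j, X i j * β j) / (1 - q0 i)
        = ∑ i, ∑ j, ((1 - Z i) * X i j / (1 - q0 i)) * β j := by
          refine Finset.sum_congr rfl fun i _ => ?_
          rw [Finset.mul_sum, Finset.sum_div]
          exact Finset.sum_congr rfl fun j _ => by ring
      _ = ∑ j, ∑ i, ((1 - Z i) * X i j / (1 - q0 i)) * β j := Finset.sum_comm
      _ = ∑ j, (∑ i, (1 - Z i) * X i j / (1 - q0 i)) * β j := by
          simp [Finset.sum_mul]
      _ = ∑ j, (∑ i, X i j) * β j := by simp only [hb0]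
      _ = ∑ j, ∑ i, X i j * β j := by simp [Finset.sum_mul]
      _ = ∑ i, ∑ j, X i j * β j := Finset.sum_comm
  -- AIPW equals IPW
  have haipw : ∀ (V : Fin N → ℝ) (β1 β0 : Fin K → ℝ),
      ((N : ℝ)⁻¹ * ∑ i, Z i * (V i - ∑ j, X i j * β1 j) / q1 i
        + (N : ℝ)⁻¹ * ∑ i, ∑ j, X i j * β1 j)
      - ((N : ℝ)⁻¹ * ∑ i, (1 - Z i) * (V i - ∑ j, X i j * β0 j) / (1 - q0 i)
        + (N : ℝ)⁻¹ * ∑ i, ∑ j, X i j * β0 j)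
      = (N : ℝ)⁻¹ * ∑ i, Z i * V i / q1 i
        - (N : ℝ)⁻¹ * ∑ i, (1 - Z i) * V i / (1 - q0 i) := by
    intro V β1 β0
    have e1 : ∑ i, Z i * (V i - ∑ j, X i j * β1 j) / q1 i
        = ∑ i, Z i * V i / q1 i - ∑ i, Z i * (∑ j, X i j * β1 j) / q1 i := by
      rw [← Finset.sum_sub_distrib]
      exact Finset.sum_congr rfl fun i _ => by ring
    have e0 : ∑ i, (1 - Z i) * (V i - ∑ j, X i j * β0 j) / (1 - q0 i)
        = ∑ i, (1 - Z i) * V i / (1 - q0 i)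
          - ∑ i, (1 - Z i) * (∑ j, X i j * β0 j) / (1 - q0 i) := by
      rw [← Finset.sum_sub_distrib]
      exact Finset.sum_congr rfl fun i _ => by ring
    rw [e1, e0, hA1 β1, hA0 β0]
    ring
  have hYa : τYaipw = τYipw := by rw [hτYaipw, hτYipw, haipw]
  have hWa : τWaipw = τWipw := by rw [hτWaipw, hτWipw, haipw]
  -- IPWRA pieces
  have hra1 : ∀ (V : Fin N → ℝ) (βt : Fin K → ℝ),
      (∀ j, ∑ i, (Z i / q1 i) * X i j * (V i - ∑ k, X i k * βt k) = 0) →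
      ∑ j, ((N : ℝ)⁻¹ * ∑ i, X i j) * βt j = (N : ℝ)⁻¹ * ∑ i, Z i * V i / q1 i := by
    intro V βt hfoc
    have hfoc0 := hfoc ⟨0, hK⟩
    have h1 : ∑ i, Z i * V i / q1 i = ∑ i, Z i * (∑ k, X i k * βt k) / q1 i := by
      have hs : ∑ i, (Z i * V i / q1 i - Z i * (∑ k, X i k * βt k) / q1 i) = 0 := by
        rw [← hfoc0]
        exact Finset.sum_congr rfl fun i _ => by rw [hX1 i]; ring
      rw [Finset.sum_sub_distrib] at hs
      linarith
    calc ∑ j, ((N : ℝ)⁻¹ * ∑ i, X i j) * βt j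
        = (N : ℝ)⁻¹ * ∑ j, (∑ i, X i j) * βt j := by
          rw [Finset.mul_sum]
          exact Finset.sum_congr rfl fun j _ => by ring
      _ = (N : ℝ)⁻¹ * ∑ j, ∑ i, X i j * βt j := by simp [Finset.sum_mul]
      _ = (N : ℝ)⁻¹ * ∑ i, ∑ j, X i j * βt j := by rw [Finset.sum_comm]
      _ = (N : ℝ)⁻¹ * ∑ i, Z i * (∑ j, X i j * βt j) / q1 i := by rw [hA1 βt]
      _ = (N : ℝ)⁻¹ * ∑ i, Z i * V i / q1 i := by rw [← h1]
  have hra0 : ∀ (V : Fin N → ℝ) (βt : Fin K → ℝ),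
      (∀ j, ∑ i, ((1 - Z i) / (1 - q0 i)) * X i j * (V i - ∑ k, X i k * βt k) = 0) →
      ∑ j, ((N : ℝ)⁻¹ * ∑ i, X i j) * βt j
        = (N : ℝ)⁻¹ * ∑ i, (1 - Z i) * V i / (1 - q0 i) := by
    intro V βt hfoc
    have hfoc0 := hfoc ⟨0, hK⟩
    have h1 : ∑ i, (1 - Z i) * V i / (1 - q0 i)
        = ∑ i, (1 - Z i) * (∑ k, X i k * βt k) / (1 - q0 i) := by
      have hs : ∑ i, ((1 - Z i) * V i / (1 - q0 i)
          - (1 - Z i) * (∑ k, X i k * βt k) / (1 - q0 i)) = 0 := by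
        rw [← hfoc0]
        exact Finset.sum_congr rfl fun i _ => by rw [hX1 i]; ring
      rw [Finset.sum_sub_distrib] at hs
      linarith
    calc ∑ j, ((N : ℝ)⁻¹ * ∑ i, X i j) * βt j
        = (N : ℝ)⁻¹ * ∑ j, (∑ i, X i j) * βt j := by
          rw [Finset.mul_sum]
          exact Finset.sum_congr rfl fun j _ => by ring
      _ = (N : ℝ)⁻¹ * ∑ j, ∑ i, X i j * βt j := by simp [Finset.sum_mul]
      _ = (N : ℝ)⁻¹ * ∑ i, ∑ j, X i j * βt j := by rw [Finset.sum_comm]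
      _ = (N : ℝ)⁻¹ * ∑ i, (1 - Z i) * (∑ j, X i j * βt j) / (1 - q0 i) := by
          rw [hA0 βt]
      _ = (N : ℝ)⁻¹ * ∑ i, (1 - Z i) * V i / (1 - q0 i) := by rw [← h1]
  have hYr : τYipwra = τYipw := by
    rw [hτYipwra, hτYipw, hra1 Y βtY1 hfocY1, hra0 Y βtY0 hfocY0]
  have hWr : τWipwra = τWipw := by
    rw [hτWipwra, hτWipw, hra1 W βtW1 hfocW1, hra0 W βtW0 hfocW0]
  exact ⟨by rw [hYa, hWa], by rw [hYr, hWr]⟩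
end

section
/- Suppose the instrument propensity scores q_i ∈ (0,1) satisfy the CBPS sample moment conditions for the ATT with treatment Z, X̄₁ = N₁^{-1} ∑_{i=1}^N [q_i (1−Z_i)/(1−q_i)] X_i, where N₁ = ∑_{i=1}^N Z_i > 0 and X̄₁ = N₁^{-1} ∑_{i=1}^N Z_i X_i. For each outcome V ∈ {Y, W}, let β_V ∈ ℝ^K be arbitrary and let β̃_V satisfy the WLS first-order conditions ∑_i [q_i (1−Z_i)/(1−q_i)] X_iᵀ (V_i − X_i β̃_V) = 0, and denote by τ_V^{ipw}, τ_V^{aipw}, τ_V^{ipwra} the corresponding IPW, AIPW, and IPWRA ATT estimates for outcome V with treatment Z. If τ_W^{ipw} ≠ 0, then the three LATT estimates are numerically identical: τ_Y^{ipw}/τ_W^{ipw} = τ_Y^{aipw}/τ_W^{aipw} = τ_Y^{ipwra}/τ_W^{ipwra}. -/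
/-- With CBPS instrument-propensity-score weights for the ATT, the IPW, AIPW
(linear conditional mean), and IPWRA (linear conditional mean) estimates of the
LATT are numerically identical. -/
theorem cbps_ipw_aipw_ipwra_latt_equivalence
    (N K : ℕ) (hN : 0 < N) (hK : 0 < K)
    (W : Fin N → ℝ) (hW : ∀ i, W i = 0 ∨ W i = 1)
    (Z : Fin N → ℝ) (hZ : ∀ i, Z i = 0 ∨ Z i = 1)
    (X : Fin N → Fin K → ℝ) (hX1 : ∀ i, X i ⟨0, hK⟩ = 1)
    (Y : Fin N → ℝ)
    (q : Fin N → ℝ) (hq : ∀ i, q i ∈ Set.Ioo (0 : ℝ) 1)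
    (hN1 : 0 < ∑ i, Z i)
    (hbal : ∀ j, (∑ i, Z i)⁻¹ * ∑ i, Z i * X i j
      = (∑ i, Z i)⁻¹ * ∑ i, q i * (1 - Z i) / (1 - q i) * X i j)
    (βY βW βtY βtW : Fin K → ℝ)
    (hfocY : ∀ j, ∑ i, (q i * (1 - Z i) / (1 - q i)) * X i j
      * (Y i - ∑ k, X i k * βtY k) = 0)
    (hfocW : ∀ j, ∑ i, (q i * (1 - Z i) / (1 - q i)) * X i j
      * (W i - ∑ k, X i k * βtW k) = 0)
    (τYipw τWipw τYaipw τWaipw τYipwra τWipwra : ℝ)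
    (hτYipw : τYipw = (∑ i, Z i)⁻¹ * ∑ i, Z i * Y i
      - (∑ i, Z i)⁻¹ * ∑ i, q i * (1 - Z i) * Y i / (1 - q i))
    (hτWipw : τWipw = (∑ i, Z i)⁻¹ * ∑ i, Z i * W i
      - (∑ i, Z i)⁻¹ * ∑ i, q i * (1 - Z i) * W i / (1 - q i))
    (hτYaipw : τYaipw = (∑ i, Z i)⁻¹ * ∑ i, Z i * Y i
      - ((∑ i, Z i)⁻¹ * ∑ i, q i * (1 - Z i) / (1 - q i) * (Y i - ∑ j, X i j * βY j)
        + ∑ j, ((∑ i, Z i)⁻¹ * ∑ i, Z i * X i j) * βY j))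
    (hτWaipw : τWaipw = (∑ i, Z i)⁻¹ * ∑ i, Z i * W i
      - ((∑ i, Z i)⁻¹ * ∑ i, q i * (1 - Z i) / (1 - q i) * (W i - ∑ j, X i j * βW j)
        + ∑ j, ((∑ i, Z i)⁻¹ * ∑ i, Z i * X i j) * βW j))
    (hτYipwra : τYipwra = (∑ i, Z i)⁻¹ * ∑ i, Z i * Y i
      - ∑ j, ((∑ i, Z i)⁻¹ * ∑ i, Z i * X i j) * βtY j)
    (hτWipwra : τWipwra = (∑ i, Z i)⁻¹ * ∑ i, Z i * W i
      - ∑ j, ((∑ i, Z i)⁻¹ * ∑ i, Z i * X i j) * βtW j)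
    (hden : τWipw ≠ 0) :
    τYipw / τWipw = τYaipw / τWaipw ∧ τYipw / τWipw = τYipwra / τWipwra := by
  have h1q : ∀ i, (1 : ℝ) - q i ≠ 0 := fun i => by have := (hq i).2; intro h; linarith
  have hdiv : ∀ (V : Fin N → ℝ), (∑ i, q i * (1 - Z i) * V i / (1 - q i))
      = ∑ i, q i * (1 - Z i) / (1 - q i) * V i := by
    intro V
    refine Finset.sum_congr rfl fun i _ => ?_
    field_simp
  have hswap : ∀ (β : Fin K → ℝ),
      (∑ j, ((∑ i, Z i)⁻¹ * ∑ i, q i * (1 - Z i) / (1 - q i) * X i j) * β j)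
      = (∑ i, Z i)⁻¹ * ∑ i, q i * (1 - Z i) / (1 - q i) * ∑ j, X i j * β j := by
    intro β
    simp_rw [Finset.mul_sum, Finset.sum_mul]
    rw [Finset.sum_comm]
    exact Finset.sum_congr rfl fun i _ => Finset.sum_congr rfl fun j _ => by ring
  -- combine AIPW second term
  have haipw : ∀ (V : Fin N → ℝ) (β : Fin K → ℝ),
      ((∑ i, Z i)⁻¹ * ∑ i, q i * (1 - Z i) / (1 - q i) * (V i - ∑ j, X i j * β j)
        + ∑ j, ((∑ i, Z i)⁻¹ * ∑ i, Z i * X i j) * β j)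
      = (∑ i, Z i)⁻¹ * ∑ i, q i * (1 - Z i) * V i / (1 - q i) := by
    intro V β
    simp_rw [hbal]
    rw [hswap, hdiv, ← mul_add, ← Finset.sum_add_distrib]
    congr 1
    exact Finset.sum_congr rfl fun i _ => by ring
  -- FOC at the constant regressor
  have hfoc : ∀ (V : Fin N → ℝ) (βt : Fin K → ℝ),
      (∀ j, ∑ i, (q i * (1 - Z i) / (1 - q i)) * X i j * (V i - ∑ k, X i k * βt k) = 0) →
      (∑ i, q i * (1 - Z i) / (1 - q i) * ∑ j, X i j * βt j)
      = ∑ i, q i * (1 - Z i) / (1 - q i) * V i := by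
    intro V βt h
    have h0 := h ⟨0, hK⟩
    simp_rw [hX1, mul_one] at h0
    have : (∑ i, q i * (1 - Z i) / (1 - q i) * V i)
        - ∑ i, q i * (1 - Z i) / (1 - q i) * ∑ j, X i j * βt j = 0 := by
      rw [← Finset.sum_sub_distrib, ← h0]
      exact Finset.sum_congr rfl fun i _ => by ring
    linarith
  have hipwra : ∀ (V : Fin N → ℝ) (βt : Fin K → ℝ),
      (∀ j, ∑ i, (q i * (1 - Z i) / (1 - q i)) * X i j * (V i - ∑ k, X i k * βt k) = 0) →
      (∑ j, ((∑ i, Z i)⁻¹ * ∑ i, Z i * X i j) * βt j)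
      = (∑ i, Z i)⁻¹ * ∑ i, q i * (1 - Z i) * V i / (1 - q i) := by
    intro V βt h
    simp_rw [hbal]
    rw [hswap, hfoc V βt h, hdiv]
  have eYa : τYaipw = τYipw := by rw [hτYaipw, hτYipw, haipw]
  have eWa : τWaipw = τWipw := by rw [hτWaipw, hτWipw, haipw]
  have eYr : τYipwra = τYipw := by rw [hτYipwra, hτYipw, hipwra Y βtY hfocY]
  have eWr : τWipwra = τWipw := by rw [hτWipwra, hτWipw, hipwra W βtW hfocW]
  rw [eYa, eWa, eYr, eWr]
  exact ⟨rfl, rfl⟩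
end
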